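/- arXiv:2603.18114 — 4 statements merged into one kernel-verified Lean document; each statement's English description precedes it below -/
import Mathlib

section
/- Let $S$ be a finite set and for each $i\in S$ let $u_i:[0,\bar P]\to\mathbb{R}$ be continuous. For $\mu\in\mathbb{R}$ define $\phi_i(\mu)=\max_{p\in[0,\bar P]}(p-\mu)e^{u_i(p)}$ and $\Phi(\mu)=\sum_{i\in S}\phi_i(\mu)$. Then $F(\mu):=\Phi(\mu)-\mu$ is continuous and strictly decreasing on $[0,\bar P]$, satisfies $F(0)\ge 0$ and $F(\bar P)\le -\bar P<0$, and hence has a unique zero $\mu^*\in[0,\bar P]$. -/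
open Set

/-- Fixed-point characterization for MNL joint pricing:
`F(μ) = ∑_{i∈S} max_{p∈[0,P̄]} (p-μ) e^{u_i(p)} - μ` is continuous and strictly
decreasing on `[0,P̄]`, with `F(0) ≥ 0` and `F(P̄) ≤ -P̄ < 0`, hence it has a
unique zero `μ* ∈ [0,P̄]`. -/
theorem mnl_fixed_point {ι : Type*} (S : Finset ι) (Pbar : ℝ) (hP : 0 < Pbar)
    (u : ι → ℝ → ℝ) (hu : ∀ i ∈ S, ContinuousOn (u i) (Icc 0 Pbar)) :
    (ContinuousOn (fun μ =>
        (∑ i ∈ S, sSup ((fun p => (p - μ) * Real.exp (u i p)) '' Icc 0 Pbar)) - μ)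
      (Icc 0 Pbar)) ∧
    (StrictAntiOn (fun μ =>
        (∑ i ∈ S, sSup ((fun p => (p - μ) * Real.exp (u i p)) '' Icc 0 Pbar)) - μ)
      (Icc 0 Pbar)) ∧
    0 ≤ (∑ i ∈ S, sSup ((fun p => (p - (0:ℝ)) * Real.exp (u i p)) '' Icc 0 Pbar)) - 0 ∧
    (∑ i ∈ S, sSup ((fun p => (p - Pbar) * Real.exp (u i p)) '' Icc 0 Pbar)) - Pbar ≤ -Pbar ∧
    -Pbar < 0 ∧
    (∃! μ : ℝ, μ ∈ Icc (0:ℝ) Pbar ∧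
      (∑ i ∈ S, sSup ((fun p => (p - μ) * Real.exp (u i p)) '' Icc 0 Pbar)) - μ = 0) := by
  have hKne : (Icc (0:ℝ) Pbar).Nonempty := nonempty_Icc.2 hP.le
  set φ : ι → ℝ → ℝ := fun i μ => sSup ((fun p => (p - μ) * Real.exp (u i p)) '' Icc 0 Pbar)
    with hφdef
  set F : ℝ → ℝ := fun μ => (∑ i ∈ S, φ i μ) - μ with hFdef
  have hc : ∀ i ∈ S, ∀ μ : ℝ,
      ContinuousOn (fun p => (p - μ) * Real.exp (u i p)) (Icc 0 Pbar) := by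
    intro i hi μ
    exact (continuousOn_id.sub continuousOn_const).mul
      (Real.continuous_exp.comp_continuousOn (hu i hi))
  have hbdd : ∀ i ∈ S, ∀ μ : ℝ,
      BddAbove ((fun p => (p - μ) * Real.exp (u i p)) '' Icc 0 Pbar) := by
    intro i hi μ
    exact (isCompact_Icc.image_of_continuousOn (hc i hi μ)).bddAbove
  have hne : ∀ i (μ : ℝ), ((fun p => (p - μ) * Real.exp (u i p)) '' Icc 0 Pbar).Nonempty :=
    fun i μ => hKne.image _
  -- antitonicity of each φ i
  have hanti : ∀ i ∈ S, ∀ μ μ' : ℝ, μ ≤ μ' → φ i μ' ≤ φ i μ := by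
    intro i hi μ μ' h
    apply csSup_le (hne i μ')
    rintro x ⟨p, hp, rfl⟩
    calc (p - μ') * Real.exp (u i p) ≤ (p - μ) * Real.exp (u i p) :=
          mul_le_mul_of_nonneg_right (by linarith) (Real.exp_pos _).le
      _ ≤ φ i μ := le_csSup (hbdd i hi μ) ⟨p, hp, rfl⟩
  -- Lipschitz bound
  have hlip : ∀ i ∈ S, ∃ M : ℝ, 0 ≤ M ∧ ∀ μ μ' : ℝ, μ ≤ μ' → φ i μ ≤ φ i μ' + (μ' - μ) * M := by
    intro i hi
    set M := sSup ((fun p => Real.exp (u i p)) '' Icc 0 Pbar) with hM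
    have hMb : BddAbove ((fun p => Real.exp (u i p)) '' Icc 0 Pbar) :=
      (isCompact_Icc.image_of_continuousOn
        (Real.continuous_exp.comp_continuousOn (hu i hi))).bddAbove
    have hMle : ∀ p ∈ Icc (0:ℝ) Pbar, Real.exp (u i p) ≤ M :=
      fun p hp => le_csSup hMb ⟨p, hp, rfl⟩
    have hM0 : 0 ≤ M := le_trans (Real.exp_pos _).le (hMle 0 (left_mem_Icc.2 hP.le))
    refine ⟨M, hM0, fun μ μ' h => ?_⟩
    apply csSup_le (hne i μ)
    rintro x ⟨p, hp, rfl⟩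
    have h1 : (p - μ') * Real.exp (u i p) ≤ φ i μ' := le_csSup (hbdd i hi μ') ⟨p, hp, rfl⟩
    have h2 : (μ' - μ) * Real.exp (u i p) ≤ (μ' - μ) * M :=
      mul_le_mul_of_nonneg_left (hMle p hp) (by linarith)
    show (p - μ) * Real.exp (u i p) ≤ φ i μ' + (μ' - μ) * M
    nlinarith [Real.exp_pos (u i p)]
  -- continuity of each φ i
  have hφcont : ∀ i ∈ S, ContinuousOn (φ i) (Icc 0 Pbar) := by
    intro i hi
    obtain ⟨M, hM0, hMle⟩ := hlip i hi
    have : LipschitzWith (Real.toNNReal M) (φ i) := by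
      apply LipschitzWith.of_dist_le_mul
      intro μ μ'
      rw [Real.dist_eq, Real.dist_eq]
      have key : ∀ a b : ℝ, a ≤ b → |φ i a - φ i b| ≤ M * |a - b| := by
        intro a b hab
        have h1 := hanti i hi a b hab
        have h2 := hMle a b hab
        rw [abs_of_nonneg (by linarith), abs_of_nonpos (by linarith)]
        nlinarith
      rcases le_total μ μ' with h | h
      · calc |φ i μ - φ i μ'| ≤ M * |μ - μ'| := key μ μ' h
          _ ≤ Real.toNNReal M * |μ - μ'| :=
            mul_le_mul_of_nonneg_right (Real.le_coe_toNNReal M) (abs_nonneg _)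
      · calc |φ i μ - φ i μ'| = |φ i μ' - φ i μ| := abs_sub_comm _ _
          _ ≤ M * |μ' - μ| := key μ' μ h
          _ = M * |μ - μ'| := by rw [abs_sub_comm]
          _ ≤ Real.toNNReal M * |μ - μ'| :=
            mul_le_mul_of_nonneg_right (Real.le_coe_toNNReal M) (abs_nonneg _)
    exact this.continuous.continuousOn
  have hFcont : ContinuousOn F (Icc 0 Pbar) :=
    (continuousOn_finset_sum S hφcont).sub continuousOn_id
  have hFanti : StrictAntiOn F (Icc 0 Pbar) := by
    intro μ hμ μ' hμ' h
    have hsum : ∑ i ∈ S, φ i μ' ≤ ∑ i ∈ S, φ i μ :=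
      Finset.sum_le_sum (fun i hi => hanti i hi μ μ' h.le)
    simp only [hFdef]
    linarith
  have hF0 : 0 ≤ F 0 := by
    have : ∀ i ∈ S, 0 ≤ φ i 0 := by
      intro i hi
      have : ((0:ℝ) - 0) * Real.exp (u i 0) ≤ φ i 0 :=
        le_csSup (hbdd i hi 0) ⟨0, left_mem_Icc.2 hP.le, rfl⟩
      simpa using this
    have := Finset.sum_nonneg this
    simp only [hFdef]; linarith
  have hFP : F Pbar ≤ -Pbar := by
    have h0 : ∀ i ∈ S, φ i Pbar ≤ 0 := by
      intro i hi
      apply Real.sSup_le ?_ le_rfl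
      rintro x ⟨p, hp, rfl⟩
      have := Real.exp_pos (u i p)
      show (p - Pbar) * Real.exp (u i p) ≤ 0
      nlinarith [hp.2]
    have := Finset.sum_nonpos h0
    simp only [hFdef]; linarith
  refine ⟨hFcont, hFanti, hF0, hFP, neg_neg_iff_pos.mpr hP, ?_⟩
  have hmem0 : (0:ℝ) ∈ Icc (0:ℝ) Pbar := left_mem_Icc.2 hP.le
  have hmemP : Pbar ∈ Icc (0:ℝ) Pbar := right_mem_Icc.2 hP.le
  have h0mem : (0:ℝ) ∈ Icc (F Pbar) (F 0) := ⟨by linarith, hF0⟩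
  obtain ⟨μ, hμmem, hμeq⟩ := intermediate_value_Icc' hP.le hFcont h0mem
  refine ⟨μ, ⟨hμmem, hμeq⟩, ?_⟩
  rintro ν ⟨hνmem, hνeq⟩
  exact hFanti.injOn hνmem hμmem (by rw [show F ν = 0 from hνeq, show F μ = 0 from hμeq])
end

section
/- Let $S$ be a finite set, $u_i:[0,\bar P]\to\mathbb{R}$ continuous for $i\in S$, and define the MNL revenue $R(\mathbf{p})=\frac{\sum_{i\in S}p_i e^{u_i(p_i)}}{1+\sum_{j\in S}e^{u_j(p_j)}}$ for $\mathbf{p}\in[0,\bar P]^S$. Let $\mu^*$ be the unique fixed point of $\mu=\sum_{i\in S}\max_{p\in[0,\bar P]}(p-\mu)e^{u_i(p)}$ on $[0,\bar P]$. Then $\sup_{\mathbf{p}\in[0,\bar P]^S}R(\mathbf{p})=\mu^*$. -/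
open Set

/-- The price-optimized MNL revenue equals the unique fixed point `μ*` of
`μ = ∑_{i∈S} max_{p∈[0,P̄]} (p - μ) e^{u_i(p)}`. -/
theorem mnl_revenue_eq_fixed_point {ι : Type*} (S : Finset ι) (Pbar : ℝ) (hP : 0 < Pbar)
    (u : ι → ℝ → ℝ) (hu : ∀ i ∈ S, ContinuousOn (u i) (Icc 0 Pbar))
    (μstar : ℝ) (hmem : μstar ∈ Icc (0:ℝ) Pbar)
    (hfix : μstar = ∑ i ∈ S,
      sSup ((fun p => (p - μstar) * Real.exp (u i p)) '' Icc 0 Pbar)) :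
    sSup {y : ℝ | ∃ p : ι → ℝ, (∀ i ∈ S, p i ∈ Icc (0:ℝ) Pbar) ∧
        y = (∑ i ∈ S, p i * Real.exp (u i (p i))) /
            (1 + ∑ j ∈ S, Real.exp (u j (p j)))} = μstar := by
  set f : ι → ℝ → ℝ := fun i p => (p - μstar) * Real.exp (u i p) with hfdef
  have hc : ∀ i ∈ S, ContinuousOn (f i) (Icc 0 Pbar) := fun i hi =>
    (continuousOn_id.sub continuousOn_const).mul (Real.continuous_exp.comp_continuousOn (hu i hi))
  have hne : (Icc (0:ℝ) Pbar).Nonempty := nonempty_Icc.2 hP.le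
  have hmax : ∀ i ∈ S, ∃ q ∈ Icc (0:ℝ) Pbar, ∀ x ∈ Icc (0:ℝ) Pbar, f i x ≤ f i q := by
    intro i hi
    obtain ⟨x, hx, hmax⟩ := isCompact_Icc.exists_isMaxOn hne (hc i hi)
    exact ⟨x, hx, hmax⟩
  choose! q hq hqmax using hmax
  have hsup : ∀ i ∈ S, sSup (f i '' Icc 0 Pbar) = f i (q i) := by
    intro i hi
    refine le_antisymm (csSup_le (hne.image _) ?_)
      (le_csSup (isCompact_Icc.image_of_continuousOn (hc i hi)).bddAbove ⟨q i, hq i hi, rfl⟩)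
    rintro y ⟨x, hx, rfl⟩
    exact hqmax i hi x hx
  have hfix' : μstar = ∑ i ∈ S, f i (q i) := by
    rw [hfix]; exact Finset.sum_congr rfl hsup
  -- positivity of denominators
  have hden : ∀ p : ι → ℝ, (0:ℝ) < 1 + ∑ j ∈ S, Real.exp (u j (p j)) := by
    intro p
    have : (0:ℝ) ≤ ∑ j ∈ S, Real.exp (u j (p j)) :=
      Finset.sum_nonneg fun j _ => (Real.exp_pos _).le
    linarith
  -- upper bound
  have hub : ∀ y ∈ {y : ℝ | ∃ p : ι → ℝ, (∀ i ∈ S, p i ∈ Icc (0:ℝ) Pbar) ∧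
      y = (∑ i ∈ S, p i * Real.exp (u i (p i))) /
          (1 + ∑ j ∈ S, Real.exp (u j (p j)))}, y ≤ μstar := by
    rintro y ⟨p, hp, rfl⟩
    rw [div_le_iff₀ (hden p)]
    have hsum : ∑ i ∈ S, f i (p i) ≤ μstar := by
      rw [hfix']
      exact Finset.sum_le_sum fun i hi => hqmax i hi (p i) (hp i hi)
    have : ∑ i ∈ S, f i (p i)
        = ∑ i ∈ S, p i * Real.exp (u i (p i)) - μstar * ∑ j ∈ S, Real.exp (u j (p j)) := by
      rw [Finset.mul_sum, ← Finset.sum_sub_distrib]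
      exact Finset.sum_congr rfl fun i _ => by simp [hfdef]; ring
    nlinarith [this, hsum]
  -- μstar is attained
  have hmemT : μstar ∈ {y : ℝ | ∃ p : ι → ℝ, (∀ i ∈ S, p i ∈ Icc (0:ℝ) Pbar) ∧
      y = (∑ i ∈ S, p i * Real.exp (u i (p i))) /
          (1 + ∑ j ∈ S, Real.exp (u j (p j)))} := by
    refine ⟨q, hq, ?_⟩
    have hd := hden q
    rw [eq_div_iff hd.ne']
    have : ∑ i ∈ S, f i (q i)
        = ∑ i ∈ S, q i * Real.exp (u i (q i)) - μstar * ∑ j ∈ S, Real.exp (u j (q j)) := by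
      rw [Finset.mul_sum, ← Finset.sum_sub_distrib]
      exact Finset.sum_congr rfl fun i _ => by simp [hfdef]; ring
    nlinarith [this, hfix']
  exact IsGreatest.csSup_eq ⟨hmemT, hub⟩
end

section
/- Let $S$ be a finite set and let $v_i,\tilde v_i:[0,\bar P]\to\mathbb{R}$ be continuous with $v_i(p)\le\tilde v_i(p)$ for all $i\in S$ and all $p\in[0,\bar P]$. Define the price-optimized MNL revenue $\mathcal{V}(u):=\sup_{\mathbf{p}\in[0,\bar P]^S}\frac{\sum_{i\in S}p_i e^{u_i(p_i)}}{1+\sum_{j\in S}e^{u_j(p_j)}}$. Then $\mathcal{V}(v)\le\mathcal{V}(\tilde v)$. -/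
open Set

/-- Revenue optimism: if `v_i ≤ ṽ_i` pointwise on `[0,P̄]` for all `i ∈ S`, then
the price-optimized MNL revenue under `v` is at most that under `ṽ`. -/
theorem mnl_revenue_optimism {ι : Type*} (S : Finset ι) (Pbar : ℝ) (hP : 0 < Pbar)
    (v vt : ι → ℝ → ℝ)
    (hv : ∀ i ∈ S, ContinuousOn (v i) (Icc 0 Pbar))
    (hvt : ∀ i ∈ S, ContinuousOn (vt i) (Icc 0 Pbar))
    (hle : ∀ i ∈ S, ∀ p ∈ Icc (0:ℝ) Pbar, v i p ≤ vt i p) :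
    sSup {y : ℝ | ∃ p : ι → ℝ, (∀ i ∈ S, p i ∈ Icc (0:ℝ) Pbar) ∧
        y = (∑ i ∈ S, p i * Real.exp (v i (p i))) /
            (1 + ∑ j ∈ S, Real.exp (v j (p j)))} ≤
    sSup {y : ℝ | ∃ p : ι → ℝ, (∀ i ∈ S, p i ∈ Icc (0:ℝ) Pbar) ∧
        y = (∑ i ∈ S, p i * Real.exp (vt i (p i))) /
            (1 + ∑ j ∈ S, Real.exp (vt j (p j)))} := by
  set B : Set ℝ := {y : ℝ | ∃ p : ι → ℝ, (∀ i ∈ S, p i ∈ Icc (0:ℝ) Pbar) ∧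
        y = (∑ i ∈ S, p i * Real.exp (vt i (p i))) /
            (1 + ∑ j ∈ S, Real.exp (vt j (p j)))} with hBdef
  have h0B : (0:ℝ) ∈ B := by
    refine ⟨fun _ => 0, fun i _ => ⟨le_refl 0, hP.le⟩, ?_⟩
    simp
  have hBne : B.Nonempty := ⟨0, h0B⟩
  have hBub : ∀ y ∈ B, y ≤ Pbar := by
    rintro y ⟨p, hp, rfl⟩
    rw [div_le_iff₀ (by positivity)]
    have h1 : ∑ i ∈ S, p i * Real.exp (vt i (p i)) ≤
        ∑ i ∈ S, Pbar * Real.exp (vt i (p i)) :=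
      Finset.sum_le_sum fun i hi =>
        mul_le_mul_of_nonneg_right (hp i hi).2 (Real.exp_pos _).le
    refine h1.trans ?_
    rw [← Finset.mul_sum]
    nlinarith [Finset.sum_nonneg (fun j (_ : j ∈ S) => (Real.exp_pos (vt j (p j))).le)]
  have hBbdd : BddAbove B := ⟨Pbar, hBub⟩
  have hμ0 : 0 ≤ sSup B := le_csSup hBbdd h0B
  have hμP : sSup B ≤ Pbar := csSup_le hBne hBub
  apply Real.sSup_le _ hμ0
  rintro y ⟨p, hp, rfl⟩
  by_contra hcon
  push_neg at hcon
  set μ := sSup B with hμdef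
  set q : ι → ℝ := fun i => max (p i) μ with hqdef
  have hqmem : ∀ i ∈ S, q i ∈ Icc (0:ℝ) Pbar := fun i hi =>
    ⟨le_max_of_le_left (hp i hi).1, max_le (hp i hi).2 hμP⟩
  have key : ∑ i ∈ S, (p i - μ) * Real.exp (v i (p i)) ≤
      ∑ i ∈ S, (q i - μ) * Real.exp (vt i (q i)) := by
    apply Finset.sum_le_sum
    intro i hi
    rcases le_or_gt μ (p i) with h | h
    · have hqi : q i = p i := max_eq_left h
      rw [hqi]
      exact mul_le_mul_of_nonneg_left
        (Real.exp_le_exp.mpr (hle i hi _ (hp i hi))) (by linarith)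
    · have hqi : q i = μ := max_eq_right h.le
      rw [hqi]
      simp only [sub_self, zero_mul]
      exact mul_nonpos_of_nonpos_of_nonneg (by linarith) (Real.exp_pos _).le
  have hDv : 0 < 1 + ∑ j ∈ S, Real.exp (v j (p j)) := by positivity
  have hlhs : μ < ∑ i ∈ S, (p i - μ) * Real.exp (v i (p i)) := by
    have hy : μ * (1 + ∑ j ∈ S, Real.exp (v j (p j))) <
        ∑ i ∈ S, p i * Real.exp (v i (p i)) := (lt_div_iff₀ hDv).mp hcon
    have hexp : ∑ i ∈ S, (p i - μ) * Real.exp (v i (p i)) =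
        (∑ i ∈ S, p i * Real.exp (v i (p i))) -
          μ * ∑ i ∈ S, Real.exp (v i (p i)) := by
      rw [Finset.mul_sum, ← Finset.sum_sub_distrib]
      exact Finset.sum_congr rfl fun i _ => by ring
    rw [hexp]
    nlinarith
  have hrhs : μ < ∑ i ∈ S, (q i - μ) * Real.exp (vt i (q i)) := lt_of_lt_of_le hlhs key
  have hyB : (∑ i ∈ S, q i * Real.exp (vt i (q i))) /
      (1 + ∑ j ∈ S, Real.exp (vt j (q j))) ∈ B := ⟨q, hqmem, rfl⟩
  have hle' := le_csSup hBbdd hyB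
  have hDt : 0 < 1 + ∑ j ∈ S, Real.exp (vt j (q j)) := by positivity
  rw [div_le_iff₀ hDt] at hle'
  have hexp2 : ∑ i ∈ S, (q i - μ) * Real.exp (vt i (q i)) =
      (∑ i ∈ S, q i * Real.exp (vt i (q i))) -
        μ * ∑ i ∈ S, Real.exp (vt i (q i)) := by
    rw [Finset.mul_sum, ← Finset.sum_sub_distrib]
    exact Finset.sum_congr rfl fun i _ => by ring
  rw [hexp2] at hrhs
  linarith
end

section
/- Let $q\in\mathbb{R}^n$ have nonnegative entries with $q_i\ge\kappa>0$ for all $i$ and $\sum_{i=1}^n q_i\le 1-\kappa$. Let $M=\mathrm{Diag}(q)-qq^\top$. Then for every $z\in\mathbb{R}^n$, $z^\top M z\ge\kappa^2\|z\|_2^2$. -/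
open Matrix

/-- Eigenvalue lower bound for the MNL Fisher-information weight matrix:
if `q_i ≥ κ > 0` and `∑ q_i ≤ 1 - κ` (outside option has mass at least `κ`),
then `M = Diag(q) - q qᵀ` satisfies `zᵀ M z ≥ κ² ‖z‖²`. -/
theorem mnl_weight_matrix_lower (n : ℕ) (κ : ℝ) (hκ : 0 < κ)
    (q : Fin n → ℝ) (hq : ∀ i, κ ≤ q i) (hsum : ∑ i, q i ≤ 1 - κ)
    (z : Fin n → ℝ) :
    κ ^ 2 * ∑ i, z i ^ 2 ≤ z ⬝ᵥ ((Matrix.diagonal q - Matrix.vecMulVec q q) *ᵥ z) := by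
  have hq0 : ∀ i, 0 ≤ q i := fun i => le_trans hκ.le (hq i)
  have key : z ⬝ᵥ ((Matrix.diagonal q - Matrix.vecMulVec q q) *ᵥ z)
      = (∑ i, q i * z i ^ 2) - (∑ i, q i * z i) ^ 2 := by
    simp only [Matrix.mulVec, dotProduct, Matrix.sub_apply, Matrix.diagonal_apply,
      Matrix.vecMulVec_apply]
    have inner : ∀ i : Fin n, ∑ j, ((if i = j then q i else 0) - q i * q j) * z j
        = q i * z i - q i * ∑ j, q j * z j := by
      intro i
      rw [Finset.sum_congr rfl (fun j _ => sub_mul _ _ _), Finset.sum_sub_distrib]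
      congr 1
      · simp [Finset.sum_ite_eq]
      · rw [Finset.mul_sum]
        exact Finset.sum_congr rfl fun j _ => by ring
    rw [Finset.sum_congr rfl fun i _ => by rw [inner i]]
    rw [Finset.sum_congr rfl fun i _ => (mul_sub (z i) _ _ : _), Finset.sum_sub_distrib]
    congr 1
    · exact Finset.sum_congr rfl fun i _ => by ring
    · rw [sq, Finset.sum_mul]
      exact Finset.sum_congr rfl fun i _ => by ring
  rw [key]
  -- Cauchy-Schwarz: (∑ q_i z_i)² ≤ (∑ q_i)(∑ q_i z_i²)
  have cs : (∑ i, q i * z i) ^ 2 ≤ (∑ i, q i) * (∑ i, q i * z i ^ 2) := by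
    have h := Finset.sum_mul_sq_le_sq_mul_sq Finset.univ
      (fun i => Real.sqrt (q i)) (fun i => Real.sqrt (q i) * z i)
    have e1 : ∀ i : Fin n, Real.sqrt (q i) * (Real.sqrt (q i) * z i) = q i * z i := by
      intro i; rw [← mul_assoc, Real.mul_self_sqrt (hq0 i)]
    have e2 : ∀ i : Fin n, Real.sqrt (q i) ^ 2 = q i := fun i => Real.sq_sqrt (hq0 i)
    have e3 : ∀ i : Fin n, (Real.sqrt (q i) * z i) ^ 2 = q i * z i ^ 2 := by
      intro i; rw [mul_pow, e2 i]
    calc (∑ i, q i * z i) ^ 2 = (∑ i, Real.sqrt (q i) * (Real.sqrt (q i) * z i)) ^ 2 := by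
          rw [Finset.sum_congr rfl fun i _ => (e1 i).symm]
      _ ≤ (∑ i, Real.sqrt (q i) ^ 2) * (∑ i, (Real.sqrt (q i) * z i) ^ 2) := h
      _ = (∑ i, q i) * (∑ i, q i * z i ^ 2) := by
          rw [Finset.sum_congr rfl fun i _ => e2 i, Finset.sum_congr rfl fun i _ => e3 i]
  have hqz2 : 0 ≤ ∑ i, q i * z i ^ 2 :=
    Finset.sum_nonneg fun i _ => mul_nonneg (hq0 i) (sq_nonneg _)
  have step1 : κ * ∑ i, q i * z i ^ 2 ≤ (∑ i, q i * z i ^ 2) - (∑ i, q i * z i) ^ 2 := by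
    have : (∑ i, q i * z i) ^ 2 ≤ (1 - κ) * (∑ i, q i * z i ^ 2) :=
      cs.trans (mul_le_mul_of_nonneg_right hsum hqz2)
    nlinarith
  have step2 : κ ^ 2 * ∑ i, z i ^ 2 ≤ κ * ∑ i, q i * z i ^ 2 := by
    rw [sq, mul_assoc]
    refine mul_le_mul_of_nonneg_left ?_ hκ.le
    rw [Finset.mul_sum]
    exact Finset.sum_le_sum fun i _ => mul_le_mul_of_nonneg_right (hq i) (sq_nonneg _)
  linarith
end
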